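/- Let N ≥ 2, let a_0, …, a_N be complex numbers, let x, y ∈ ℝ with z = x + iy ≠ 0, set p̂ = 2x, q̂ = −(x² + y²). Define b_{N+1} = 0, b_N = a_N, b_n = a_n + p̂·b_{n+1} + q̂·b_{n+2} for n = N−1, …, 1, and let g_n = Σ_{k=n}^{N} |a_k|·|z|^{k−n}. Then for every n with 1 ≤ n ≤ N, |b_n| ≤ (N − n + 1)·g_n. -/

import Mathlib

open Finset Complex


/-- Auxiliary Chebyshev-like sequence for the Goertzel recurrence. -/
def goertzelP (x y : ℝ) : ℕ → ℝ
  | 0 => 1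
  | 1 => 2 * x
  | m + 2 => 2 * x * goertzelP x y (m + 1) - (x ^ 2 + y ^ 2) * goertzelP x y m

lemma goertzelP_inv (x y : ℝ) : ∀ m,
    (goertzelP x y (m + 1) - x * goertzelP x y m) ^ 2
      + y ^ 2 * (goertzelP x y m) ^ 2 = (x ^ 2 + y ^ 2) ^ (m + 1) := by
  intro m
  induction m with
  | zero => simp [goertzelP]; ring
  | succ m ih =>
    show (2 * x * goertzelP x y (m + 1) - (x ^ 2 + y ^ 2) * goertzelP x y m
        - x * goertzelP x y (m + 1)) ^ 2 + y ^ 2 * (goertzelP x y (m + 1)) ^ 2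
      = (x ^ 2 + y ^ 2) ^ (m + 2)
    linear_combination (x ^ 2 + y ^ 2) * ih

lemma goertzelP_bound (x y : ℝ) : ∀ m,
    |goertzelP x y m| ≤ (m + 1) * Real.sqrt (x ^ 2 + y ^ 2) ^ m := by
  set R := Real.sqrt (x ^ 2 + y ^ 2) with hR
  have hR0 : 0 ≤ R := Real.sqrt_nonneg _
  have hxR : |x| ≤ R := by
    rw [hR, ← Real.sqrt_sq_eq_abs]
    exact Real.sqrt_le_sqrt (by nlinarith)
  have hQ : ∀ m, |goertzelP x y (m + 1) - x * goertzelP x y m| ≤ R ^ (m + 1) := by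
    intro m
    have h := goertzelP_inv x y m
    have h2 : (goertzelP x y (m + 1) - x * goertzelP x y m) ^ 2 ≤ (x ^ 2 + y ^ 2) ^ (m + 1) := by
      nlinarith [sq_nonneg (y * goertzelP x y m)]
    calc |goertzelP x y (m + 1) - x * goertzelP x y m|
        = Real.sqrt ((goertzelP x y (m + 1) - x * goertzelP x y m) ^ 2) :=
          (Real.sqrt_sq_eq_abs _).symm
      _ ≤ Real.sqrt ((x ^ 2 + y ^ 2) ^ (m + 1)) := Real.sqrt_le_sqrt h2
      _ = R ^ (m + 1) := by
          have h3 : (x ^ 2 + y ^ 2) ^ (m + 1) = (R ^ (m + 1)) ^ 2 := by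
            rw [hR, ← pow_mul, mul_comm (m+1) 2, pow_mul, Real.sq_sqrt (by positivity)]
          rw [h3, Real.sqrt_sq (by positivity)]
  intro m
  induction m with
  | zero => simp [goertzelP]
  | succ m ih =>
    have : goertzelP x y (m + 1)
        = x * goertzelP x y m + (goertzelP x y (m + 1) - x * goertzelP x y m) := by ring
    calc |goertzelP x y (m + 1)|
        = |x * goertzelP x y m + (goertzelP x y (m + 1) - x * goertzelP x y m)| := by
          rw [← this]
      _ ≤ |x * goertzelP x y m| + |goertzelP x y (m + 1) - x * goertzelP x y m| :=
          abs_add_le _ _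
      _ ≤ R * ((m + 1) * R ^ m) + R ^ (m + 1) := by
          rw [abs_mul]
          gcongr
          exact hQ m
      _ ≤ ((m + 1 : ℕ) + 1) * R ^ (m + 1) := by push_cast; rw [pow_succ]; nlinarith [pow_nonneg hR0 m]

lemma goertzel_rep (N : ℕ) (a : ℕ → ℂ) (x y : ℝ)
    (phat qhat : ℝ) (hp : phat = 2 * x) (hq : qhat = -(x ^ 2 + y ^ 2))
    (b : ℕ → ℂ) (hbN1 : b (N + 1) = 0) (hbN : b N = a N)
    (hb : ∀ n, 1 ≤ n → n ≤ N - 1 →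
      b n = a n + (phat : ℂ) * b (n + 1) + (qhat : ℂ) * b (n + 2)) :
    ∀ d n, 1 ≤ n → n + d = N →
      b n = ∑ j ∈ range (d + 1), a (n + j) * ((goertzelP x y j : ℝ) : ℂ) := by
  intro d
  induction d using Nat.strong_induction_on with
  | _ d ih =>
    intro n hn hnd
    match d, hnd with
    | 0, hnd =>
      simp only [Nat.add_zero] at hnd
      subst hnd
      simp [goertzelP, hbN]
    | 1, hnd =>
      have hn1 : n + 1 = N := hnd
      have h1 : b n = a n + (phat : ℂ) * b (n + 1) + (qhat : ℂ) * b (n + 2) :=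
        hb n hn (by omega)
      rw [h1, hn1, hbN]
      rw [show n + 2 = N + 1 by omega, hbN1]
      simp [Finset.sum_range_succ, goertzelP, hp, ← hn1]
      ring
    | (d + 2), hnd =>
      have h1 : b n = a n + (phat : ℂ) * b (n + 1) + (qhat : ℂ) * b (n + 2) :=
        hb n hn (by omega)
      have ih1 := ih (d + 1) (by omega) (n + 1) (by omega) (by omega)
      have ih2 := ih d (by omega) (n + 2) (by omega) (by omega)
      rw [h1, ih1, ih2]
      -- expand RHS
      rw [Finset.sum_range_succ' (fun j => a (n + j) * ((goertzelP x y j : ℝ) : ℂ)) (d + 2)]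
      rw [Finset.sum_range_succ' (fun j => a (n + (j + 1)) * ((goertzelP x y (j + 1) : ℝ) : ℂ)) (d + 1)]
      rw [Finset.sum_range_succ' (fun j => a (n + 1 + j) * ((goertzelP x y j : ℝ) : ℂ)) (d + 1)]
      have hgp : ∀ j, ((goertzelP x y (j + 1 + 1) : ℝ) : ℂ)
          = 2 * x * ((goertzelP x y (j + 1) : ℝ) : ℂ)
            - (x ^ 2 + y ^ 2) * ((goertzelP x y j : ℝ) : ℂ) := by
        intro j
        show ((goertzelP x y (j + 2) : ℝ) : ℂ) = _
        rw [show goertzelP x y (j + 2)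
          = 2 * x * goertzelP x y (j + 1) - (x ^ 2 + y ^ 2) * goertzelP x y j from rfl]
        push_cast
        ring
      have hidx : ∀ j, n + (j + 1 + 1) = n + 1 + (j + 1) := fun j => by omega
      have hidx2 : ∀ j, n + 1 + (j + 1) = n + 2 + j := fun j => by omega
      simp only [hidx]
      simp only [hidx2]
      simp only [hgp]
      simp only [hp, hq]
      set S1 := ∑ j ∈ range (d + 1), a (n + 2 + j) * ((goertzelP x y (j + 1) : ℝ) : ℂ) with hS1
      set S2 := ∑ j ∈ range (d + 1), a (n + 2 + j) * ((goertzelP x y j : ℝ) : ℂ) with hS2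
      have hR : ∑ j ∈ range (d + 1), a (n + 2 + j) *
            (2 * (x : ℂ) * ((goertzelP x y (j + 1) : ℝ) : ℂ)
              - ((x : ℂ) ^ 2 + (y : ℂ) ^ 2) * ((goertzelP x y j : ℝ) : ℂ))
          = 2 * (x : ℂ) * S1 - ((x : ℂ) ^ 2 + (y : ℂ) ^ 2) * S2 := by
        rw [hS1, hS2, Finset.mul_sum, Finset.mul_sum, ← Finset.sum_sub_distrib]
        exact Finset.sum_congr rfl fun j _ => by ring
      have hg0 : goertzelP x y 0 = 1 := rfl
      have hg1 : goertzelP x y 1 = 2 * x := rfl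
      rw [hR, hg0, hg1]
      rw [show n + (0 + 1) = n + 1 by omega, show n + 1 + 0 = n + 1 by omega,
        show n + 0 = n by omega]
      push_cast
      ring

/-- Bound on the Goertzel backward recurrence: with
`g n = ∑_{k=n}^{N} |a k| * |z|^(k-n)`, one has `|b n| ≤ (N - n + 1) * g n`
for `1 ≤ n ≤ N`. -/
theorem goertzel_b_bound (N : ℕ) (hN : 2 ≤ N) (a : ℕ → ℂ) (x y : ℝ) (z : ℂ)
    (hz : z = (x : ℂ) + (y : ℂ) * I) (hz0 : z ≠ 0)
    (phat qhat : ℝ) (hp : phat = 2 * x) (hq : qhat = -(x ^ 2 + y ^ 2))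
    (b : ℕ → ℂ) (hbN1 : b (N + 1) = 0) (hbN : b N = a N)
    (hb : ∀ n, 1 ≤ n → n ≤ N - 1 →
      b n = a n + (phat : ℂ) * b (n + 1) + (qhat : ℂ) * b (n + 2))
    (g : ℕ → ℝ)
    (hg : ∀ n ≤ N, g n = ∑ k ∈ Icc n N, ‖a k‖ * ‖z‖ ^ (k - n)) :
    ∀ n, 1 ≤ n → n ≤ N → ‖b n‖ ≤ (N - n + 1 : ℕ) * g n := by
  have hRz : ‖z‖ = Real.sqrt (x ^ 2 + y ^ 2) := by
    rw [hz, Complex.norm_def, Complex.normSq_add_mul_I]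
  set R := Real.sqrt (x ^ 2 + y ^ 2) with hRdef
  have hR0 : 0 ≤ R := Real.sqrt_nonneg _
  intro n hn1 hnN
  set d := N - n with hd
  have hnd : n + d = N := by omega
  have hrep := goertzel_rep N a x y phat qhat hp hq b hbN1 hbN hb d n hn1 hnd
  have hgn : g n = ∑ j ∈ range (d + 1), ‖a (n + j)‖ * R ^ j := by
    rw [hg n hnN, ← Finset.Ico_add_one_right_eq_Icc, Finset.sum_Ico_eq_sum_range]
    rw [show N + 1 - n = d + 1 by omega]
    exact Finset.sum_congr rfl fun j _ => by rw [hRz, show n + j - n = j by omega]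
  rw [hrep, hgn]
  have hcast : ((N - n + 1 : ℕ) : ℝ) = (d : ℝ) + 1 := by push_cast [hd]; ring
  rw [hcast, Finset.mul_sum]
  calc ‖∑ j ∈ range (d + 1), a (n + j) * ((goertzelP x y j : ℝ) : ℂ)‖
      ≤ ∑ j ∈ range (d + 1), ‖a (n + j) * ((goertzelP x y j : ℝ) : ℂ)‖ :=
        norm_sum_le _ _
    _ ≤ ∑ j ∈ range (d + 1), ((d : ℝ) + 1) * (‖a (n + j)‖ * R ^ j) := by
        apply Finset.sum_le_sum
        intro j hj
        rw [norm_mul, Complex.norm_real, Real.norm_eq_abs]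
        have hb1 : |goertzelP x y j| ≤ ((j : ℝ) + 1) * R ^ j := by
          have := goertzelP_bound x y j; push_cast at this ⊢; linarith
        have hjd : (j : ℝ) + 1 ≤ (d : ℝ) + 1 := by
          have hjle : j ≤ d := by
            have := Finset.mem_range.mp hj; omega
          have := (Nat.cast_le (α := ℝ)).mpr hjle
          linarith
        calc ‖a (n + j)‖ * |goertzelP x y j|
            ≤ ‖a (n + j)‖ * (((j : ℝ) + 1) * R ^ j) :=
              mul_le_mul_of_nonneg_left hb1 (norm_nonneg _)
          _ = ((j : ℝ) + 1) * (‖a (n + j)‖ * R ^ j) := by ring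
          _ ≤ ((d : ℝ) + 1) * (‖a (n + j)‖ * R ^ j) :=
              mul_le_mul_of_nonneg_right hjd
                (mul_nonneg (norm_nonneg _) (pow_nonneg hR0 j))
    _ = ∑ j ∈ range (d + 1), ((d : ℝ) + 1) * (‖a (n + j)‖ * R ^ j) := rfl
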